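/- arXiv:math/9908024 — 2 statements merged into one kernel-verified Lean document; each statement's English description precedes it below -/
import Mathlib

section
/- Let n be a positive integer and a a nonzero integer. Then there exist integers x_1, ..., x_n such that x_1 · x_2^2 · x_3^3 ⋯ x_n^n = a, and for every prime p: ord_p(x_n) = ⌊ord_p(a)/n⌋, ord_p(x_i) = 1 if 1 ≤ i ≤ n−1 and i = ord_p(a) − n⌊ord_p(a)/n⌋, and ord_p(x_i) = 0 otherwise. -/
open Finset

theorem canonical_decomposition_exists (n : ℕ) (hn : 0 < n) (a : ℤ) (ha : a ≠ 0) :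
    ∃ x : ℕ → ℤ,
      (∏ i ∈ Finset.Icc 1 n, x i ^ i) = a ∧
      ∀ p : ℕ, p.Prime →
        padicValInt p (x n) = padicValInt p a / n ∧
        ∀ i ∈ Finset.Icc 1 (n - 1),
          padicValInt p (x i) = if i = padicValInt p a % n then 1 else 0 := by
  set m := a.natAbs with hmdef
  have hm : m ≠ 0 := Int.natAbs_ne_zero.mpr ha
  set e : ℕ → ℕ → ℕ := fun p i =>
    if i = n then m.factorization p / n else if m.factorization p % n = i then 1 else 0 with he
  set N : ℕ → ℕ := fun i => ∏ p ∈ m.primeFactors, p ^ e p i with hN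
  refine ⟨fun i => (if i = 1 then a.sign else 1) * (N i : ℤ), ?_, ?_⟩
  · -- product equals a
    have key : ∀ q ∈ m.primeFactors, ∑ i ∈ Finset.Icc 1 n, e q i * i = m.factorization q := by
      intro q _
      have hsplit : Finset.Icc 1 n = insert n (Finset.Icc 1 (n-1)) := by
        ext i; simp only [Finset.mem_insert, Finset.mem_Icc]; omega
      rw [hsplit, Finset.sum_insert (by simp only [Finset.mem_Icc]; omega)]
      have h1 : e q n * n = m.factorization q / n * n := by simp [he]
      have h2 : ∑ i ∈ Finset.Icc 1 (n-1), e q i * i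
          = if m.factorization q % n ∈ Finset.Icc 1 (n-1) then m.factorization q % n else 0 := by
        rw [← Finset.sum_ite_eq' (Finset.Icc 1 (n-1)) (m.factorization q % n) (fun i => i)]
        apply Finset.sum_congr rfl
        intro i hi
        simp only [Finset.mem_Icc] at hi
        have hin : i ≠ n := by omega
        simp only [he, hin, if_false]
        by_cases h : m.factorization q % n = i
        · simp [h]
        · simp [h, Ne.symm h]
      have h3 : (if m.factorization q % n ∈ Finset.Icc 1 (n-1) then m.factorization q % n else 0)
          = m.factorization q % n := by
        by_cases h : m.factorization q % n ∈ Finset.Icc 1 (n-1)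
        · simp [h]
        · simp only [Finset.mem_Icc] at h
          have := Nat.mod_lt (m.factorization q) hn
          have : m.factorization q % n = 0 := by omega
          simp [h, this]
      rw [h1, h2, h3]
      exact Nat.div_add_mod' _ _
    have hprodN : ∏ i ∈ Finset.Icc 1 n, N i ^ i = m := by
      rw [hN]
      simp only
      calc ∏ i ∈ Finset.Icc 1 n, (∏ p ∈ m.primeFactors, p ^ e p i) ^ i
          = ∏ i ∈ Finset.Icc 1 n, ∏ p ∈ m.primeFactors, (p ^ e p i) ^ i := by
            exact Finset.prod_congr rfl fun i _ => Finset.prod_pow _ _ _ |>.symm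
        _ = ∏ q ∈ m.primeFactors, ∏ i ∈ Finset.Icc 1 n, (q ^ e q i) ^ i := Finset.prod_comm
        _ = ∏ q ∈ m.primeFactors, q ^ (∑ i ∈ Finset.Icc 1 n, e q i * i) := by
            apply Finset.prod_congr rfl; intro q _
            rw [← Finset.prod_pow_eq_pow_sum]
            apply Finset.prod_congr rfl; intro i _; rw [← pow_mul]
        _ = ∏ q ∈ m.primeFactors, q ^ m.factorization q :=
            Finset.prod_congr rfl fun q hq => by rw [key q hq]
        _ = m := by
            rw [← Nat.support_factorization]
            exact Nat.factorization_prod_pow_eq_self hm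
    have h1n : (1:ℕ) ∈ Finset.Icc 1 n := by simp only [Finset.mem_Icc]; omega
    rw [← Finset.prod_erase_mul _ _ h1n]
    have hrest : ∀ i ∈ (Finset.Icc 1 n).erase 1,
        ((if i = 1 then a.sign else 1) * (N i : ℤ)) ^ i = (N i : ℤ) ^ i := by
      intro i hi
      have : i ≠ 1 := (Finset.mem_erase.mp hi).1
      simp [this]
    rw [Finset.prod_congr rfl hrest]
    simp only [pow_one, if_pos rfl, if_true]
    have : (∏ i ∈ (Finset.Icc 1 n).erase 1, (N i : ℤ) ^ i) * (a.sign * (N 1 : ℤ))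
        = a.sign * ∏ i ∈ Finset.Icc 1 n, (N i : ℤ) ^ i := by
      rw [← Finset.prod_erase_mul _ _ h1n]
      ring
    rw [this]
    have : (∏ i ∈ Finset.Icc 1 n, (N i : ℤ) ^ i) = (m : ℤ) := by
      rw [← hprodN]; push_cast; rfl
    rw [this, hmdef, Int.sign_mul_natAbs]
  · -- valuations
    intro p hp
    have hNfact : ∀ i, (N i).factorization p = if p ∈ m.primeFactors then e p i else 0 := by
      intro i
      rw [hN]
      simp only
      rw [Nat.factorization_prod (fun q hq => pow_ne_zero _ (Nat.prime_of_mem_primeFactors hq).ne_zero)]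
      rw [Finsupp.finset_sum_apply]
      rw [← Finset.sum_ite_eq' m.primeFactors p (fun q => e q i)]
      apply Finset.sum_congr rfl
      intro q hq
      simp [(Nat.prime_of_mem_primeFactors hq).factorization_pow, Finsupp.single_apply, eq_comm]
    have hval : ∀ i, padicValInt p ((if i = 1 then a.sign else 1) * (N i : ℤ))
        = (N i).factorization p := by
      intro i
      have h1 : ((if i = 1 then a.sign else 1) * (N i : ℤ)).natAbs = N i := by
        rw [Int.natAbs_mul]
        by_cases h : i = 1 <;>
          simp [h, Int.natAbs_sign_of_ne_zero ha]
      show padicValNat p ((if i = 1 then a.sign else 1) * (N i : ℤ)).natAbs = _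
      rw [h1, Nat.factorization_def _ hp]
    have hva : padicValInt p a = m.factorization p := by
      show padicValNat p a.natAbs = _
      rw [Nat.factorization_def _ hp]
    have hcase : ∀ i, (N i).factorization p = if p ∈ m.primeFactors then e p i else 0 := hNfact
    constructor
    · rw [hval, hva, hNfact]
      by_cases hpm : p ∈ m.primeFactors
      · simp [hpm, he]
      · have h0 : m.factorization p = 0 := by
          rw [← Nat.support_factorization] at hpm
          exact Finsupp.notMem_support_iff.mp hpm
        simp [hpm, h0]
    · intro i hi
      simp only [Finset.mem_Icc] at hi
      have hin : i ≠ n := by omega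
      rw [hval, hva, hNfact]
      by_cases hpm : p ∈ m.primeFactors
      · simp only [hpm, if_true, he, hin, if_false]
        exact if_congr (by constructor <;> exact Eq.symm) rfl rfl
      · have h0 : m.factorization p = 0 := by
          rw [← Nat.support_factorization] at hpm
          exact Finsupp.notMem_support_iff.mp hpm
        have hi0 : i ≠ 0 := by omega
        simp [hpm, h0, hi0]
end

section
/- Let a, b, c be nonzero pairwise coprime integers with a + b + c = 0, and let n be a positive integer. Let x_1,...,x_n, y_1,...,y_n, z_1,...,z_n be integers forming the canonical decompositions of a, b, c respectively (i.e., ∏ x_i^i = a with ord_p(x_n) = ⌊ord_p(a)/n⌋, ord_p(x_i) = 1 exactly when i = ord_p(a) − n⌊ord_p(a)/n⌋ and 1 ≤ i ≤ n−1, ord_p(x_i) = 0 otherwise, and similarly for y_i with b and z_i with c). Then |x_1⋯x_n · y_1⋯y_n · z_1⋯z_n| ≤ rad(abc) · |abc|^{1/n}, where rad(m) denotes the radical (product of distinct prime divisors) of m. -/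
open Finset

/-- The radical of a nonzero integer: the product of its distinct prime divisors. -/
def Int.radical' (m : ℤ) : ℕ := ∏ p ∈ m.natAbs.primeFactors, p

/-- `x 1, …, x n` is the canonical decomposition of `a`: `∏ x i ^ i = a`, with
`ord_p (x n) = ⌊ord_p a / n⌋`, `ord_p (x i) = 1` exactly when `i = ord_p a mod n`
(for `1 ≤ i ≤ n - 1`), and `ord_p (x i) = 0` otherwise. -/
def IsCanonicalDecomp (n : ℕ) (a : ℤ) (x : ℕ → ℤ) : Prop :=
  (∀ i ∈ Finset.Icc 1 n, x i ≠ 0) ∧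
  (∏ i ∈ Finset.Icc 1 n, x i ^ i) = a ∧
  ∀ p : ℕ, p.Prime →
    padicValInt p (x n) = padicValInt p a / n ∧
    ∀ i ∈ Finset.Icc 1 (n - 1),
      padicValInt p (x i) = if i = padicValInt p a % n then 1 else 0

lemma radical'_ne_zero (a : ℤ) : Int.radical' a ≠ 0 :=
  Finset.prod_ne_zero_iff.mpr fun p hp => (Nat.prime_of_mem_primeFactors hp).ne_zero

lemma radical'_factorization (a : ℤ) (p : ℕ) :
    (Int.radical' a).factorization p = if p ∈ a.natAbs.primeFactors then 1 else 0 := by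
  unfold Int.radical'
  rw [Nat.factorization_prod (fun q hq => (Nat.prime_of_mem_primeFactors hq).ne_zero)]
  rw [Finsupp.finset_sum_apply]
  have h : ∀ q ∈ a.natAbs.primeFactors, (Nat.factorization q) p = if q = p then 1 else 0 := by
    intro q hq
    rw [(Nat.prime_of_mem_primeFactors hq).factorization, Finsupp.single_apply]
  rw [Finset.sum_congr rfl h, Finset.sum_ite_eq']

lemma key_dvd (n : ℕ) (hn : 0 < n) (a : ℤ) (ha : a ≠ 0) (x : ℕ → ℤ)
    (hx : IsCanonicalDecomp n a x) :
    ((∏ i ∈ Finset.Icc 1 n, x i).natAbs) ^ n ∣ (Int.radical' a) ^ n * a.natAbs := by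
  obtain ⟨m, rfl⟩ : ∃ m, n = m + 1 := ⟨n - 1, (Nat.succ_pred_eq_of_pos hn).symm⟩
  set n := m + 1 with hndef
  have hX : (∏ i ∈ Finset.Icc 1 n, x i) ≠ 0 :=
    Finset.prod_ne_zero_iff.mpr hx.1
  have hXn : ((∏ i ∈ Finset.Icc 1 n, x i).natAbs) ^ n ≠ 0 :=
    pow_ne_zero _ (Int.natAbs_ne_zero.mpr hX)
  have hR : (Int.radical' a) ^ n * a.natAbs ≠ 0 :=
    mul_ne_zero (pow_ne_zero _ (radical'_ne_zero a)) (Int.natAbs_ne_zero.mpr ha)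
  rw [← Nat.factorization_le_iff_dvd hXn hR]
  intro p
  by_cases hp : p.Prime
  · obtain ⟨h1, h2⟩ := hx.2.2 p hp
    set k : ℕ := padicValInt p a with hkdef
    have hka : a.natAbs.factorization p = k := by
      rw [Nat.factorization_def _ hp]; rfl
    have hfac : ∀ i ∈ Finset.Icc 1 n, ((x i).natAbs).factorization p = padicValInt p (x i) := by
      intro i hi
      rw [Nat.factorization_def _ hp]; rfl
    have hNfac : ((∏ i ∈ Finset.Icc 1 n, x i).natAbs).factorization p
        = (if k % n ∈ Finset.Icc 1 m then 1 else 0) + k / n := by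
      rw [show (∏ i ∈ Finset.Icc 1 n, x i).natAbs = ∏ i ∈ Finset.Icc 1 n, (x i).natAbs from
        map_prod Int.natAbsHom x _, Nat.factorization_prod
        (fun i hi => Int.natAbs_ne_zero.mpr (hx.1 i hi)), Finsupp.finset_sum_apply,
        Finset.sum_congr rfl hfac, Finset.sum_Icc_succ_top (Nat.le_add_left 1 m)]
      have : ∀ i ∈ Finset.Icc 1 m, padicValInt p (x i) = if i = k % n then 1 else 0 := by
        intro i hi
        simpa using h2 i (by simpa [hndef] using hi)
      rw [Finset.sum_congr rfl this, Finset.sum_ite_eq', h1]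
    rw [Nat.factorization_pow, Nat.factorization_mul (pow_ne_zero _ (radical'_ne_zero a))
      (Int.natAbs_ne_zero.mpr ha), Nat.factorization_pow]
    simp only [Finsupp.coe_add, Finsupp.coe_smul, Pi.add_apply, Pi.smul_apply, smul_eq_mul]
    rw [hNfac, hka, radical'_factorization]
    by_cases hmod : k % n = 0
    · have : k % n ∉ Finset.Icc 1 m := by simp [hmod]
      rw [if_neg this, zero_add, Nat.mul_div_cancel' (Nat.dvd_of_mod_eq_zero hmod)]
      exact Nat.le_add_left _ _
    · have hmem : k % n ∈ Finset.Icc 1 m := by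
        rw [Finset.mem_Icc]
        exact ⟨Nat.one_le_iff_ne_zero.mpr hmod, Nat.lt_succ_iff.mp (Nat.mod_lt _ hn)⟩
      have hpf : p ∈ a.natAbs.primeFactors := by
        rw [← Nat.support_factorization, Finsupp.mem_support_iff, hka]
        intro hk0; exact hmod (by simp [hk0])
      rw [if_pos hmem, if_pos hpf]
      have h3 : n * (k / n) ≤ k := Nat.mul_div_le k n
      have h4 : n * (1 + k / n) = n + n * (k / n) := by ring
      omega
  · simp [Nat.factorization_eq_zero_of_not_prime _ hp]

lemma radical'_mul (a b : ℤ) (h : Int.gcd a b = 1) :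
    Int.radical' (a * b) = Int.radical' a * Int.radical' b := by
  unfold Int.radical'
  have h' : Nat.Coprime a.natAbs b.natAbs := h
  rw [Int.natAbs_mul, Nat.Coprime.primeFactors_mul h',
    Finset.prod_union (Nat.Coprime.disjoint_primeFactors h')]

theorem prod_counting_bound (n : ℕ) (hn : 0 < n) (a b c : ℤ)
    (ha : a ≠ 0) (hb : b ≠ 0) (hc : c ≠ 0)
    (hab : Int.gcd a b = 1) (hbc : Int.gcd b c = 1) (hac : Int.gcd a c = 1)
    (hsum : a + b + c = 0)
    (x y z : ℕ → ℤ)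
    (hx : IsCanonicalDecomp n a x) (hy : IsCanonicalDecomp n b y)
    (hz : IsCanonicalDecomp n c z) :
    ((((∏ i ∈ Finset.Icc 1 n, x i) * (∏ i ∈ Finset.Icc 1 n, y i) *
        (∏ i ∈ Finset.Icc 1 n, z i)).natAbs : ℝ)) ≤
      (Int.radical' (a * b * c) : ℝ) *
        (((a * b * c).natAbs : ℝ)) ^ ((1 : ℝ) / n) := by
  have habc : Int.gcd (a * b) c = 1 := by
    have : Nat.Coprime ((a*b).natAbs) c.natAbs := by
      rw [Int.natAbs_mul]
      exact Nat.Coprime.mul hac hbc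
    exact this
  have hrad : Int.radical' (a * b * c) = Int.radical' a * Int.radical' b * Int.radical' c := by
    rw [radical'_mul _ _ habc, radical'_mul _ _ hab]
  set N : ℕ := ((∏ i ∈ Finset.Icc 1 n, x i) * (∏ i ∈ Finset.Icc 1 n, y i) *
      (∏ i ∈ Finset.Icc 1 n, z i)).natAbs with hN
  set M : ℕ := Int.radical' (a * b * c) with hM
  set A : ℕ := (a * b * c).natAbs with hA
  have hdvd : N ^ n ∣ M ^ n * A := by
    have h1 := key_dvd n hn a ha x hx
    have h2 := key_dvd n hn b hb y hy
    have h3 := key_dvd n hn c hc z hz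
    have h123 := mul_dvd_mul (mul_dvd_mul h1 h2) h3
    have e1 : N ^ n = (∏ i ∈ Finset.Icc 1 n, x i).natAbs ^ n *
        (∏ i ∈ Finset.Icc 1 n, y i).natAbs ^ n * (∏ i ∈ Finset.Icc 1 n, z i).natAbs ^ n := by
      rw [hN]; simp only [Int.natAbs_mul]; ring
    have e2 : M ^ n * A = Int.radical' a ^ n * a.natAbs * (Int.radical' b ^ n * b.natAbs) *
        (Int.radical' c ^ n * c.natAbs) := by
      rw [hrad, hA]; simp only [Int.natAbs_mul]; ring
    rw [e1, e2]; exact h123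
  have hApos : 0 < A := Int.natAbs_pos.mpr (by
    exact mul_ne_zero (mul_ne_zero ha hb) hc)
  have hRpos : 0 < M ^ n * A :=
    Nat.mul_pos (Nat.pos_of_ne_zero (pow_ne_zero _ (radical'_ne_zero _))) hApos
  have hle : N ^ n ≤ M ^ n * A := Nat.le_of_dvd hRpos hdvd
  have hn' : (n : ℝ) ≠ 0 := Nat.cast_ne_zero.mpr hn.ne'
  have hAnn : (0:ℝ) ≤ (A:ℝ) := Nat.cast_nonneg _
  have hroot : ((A:ℝ) ^ ((1:ℝ)/n)) ^ n = (A:ℝ) := by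
    rw [← Real.rpow_natCast ((A:ℝ) ^ ((1:ℝ)/n)) n, ← Real.rpow_mul hAnn,
      one_div, inv_mul_cancel₀ hn', Real.rpow_one]
  refine le_of_pow_le_pow_left₀ hn.ne' (by positivity) ?_
  rw [mul_pow, hroot]
  exact_mod_cast hle
end
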